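/- Let f : ℝⁿ → ℝ be affine on a simplex [a₀,...,a_d] with f(aᵢ) = 0 for i = 0,...,k and f(aᵢ) > δ for i = k+1,...,d, where δ > 0. Then for any point y in the simplex with 0 < f(y) = t₀ ≤ δ, there exists a unique point x in the simplex with f(x) = δ such that y lies on the segment from q(x) to x, where q(x) is the radial projection onto the face [a₀,...,a_k] defined by normalizing the first k+1 barycentric coordinates. Explicitly, the barycentric coordinates λ of x are uniquely determined by the linear system λ + ((δ-t₀)/δ)·(λ₀/α - λ₀, ..., λ_k/α - λ_k, -λ_{k+1}, ..., -λ_d) = r, where r are the barycentric coordinates of y and α = Σ_{i≤k} λᵢ. -/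

import Mathlib

open Finset

lemma fcomb17 {n m : ℕ} (f : (Fin n → ℝ) →ᵃ[ℝ] ℝ) (a : Fin m → (Fin n → ℝ)) (w : Fin m → ℝ)
    (hw : ∑ i, w i = 1) : f (∑ i, w i • a i) = ∑ i, w i * f (a i) := by
  rw [← Finset.univ.affineCombination_eq_linear_combination a w hw,
    Finset.univ.map_affineCombination a w hw f,
    Finset.univ.affineCombination_eq_linear_combination (f ∘ a) w hw]
  simp [smul_eq_mul]

lemma bary_unique17 {n m : ℕ} {a : Fin m → (Fin n → ℝ)} (ha : AffineIndependent ℝ a)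
    (w v : Fin m → ℝ) (hw : ∑ i, w i = 1) (hv : ∑ i, v i = 1)
    (h : ∑ i, w i • a i = ∑ i, v i • a i) : w = v := by
  have h2 := ha.indicator_eq_of_affineCombination_eq univ univ w v hw hv (by
    rw [Finset.univ.affineCombination_eq_linear_combination a w hw,
      Finset.univ.affineCombination_eq_linear_combination a v hv]; exact h)
  simpa [Set.indicator_univ] using h2

theorem stmt17 {n d : ℕ} (a : Fin (d + 1) → (Fin n → ℝ)) (ha : AffineIndependent ℝ a)
    (k : ℕ) (hk : k < d) (f : (Fin n → ℝ) →ᵃ[ℝ] ℝ) (δ : ℝ) (hδ : 0 < δ)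
    (hf0 : ∀ i : Fin (d + 1), (i : ℕ) ≤ k → f (a i) = 0)
    (hf1 : ∀ i : Fin (d + 1), k < (i : ℕ) → δ < f (a i))
    (y : Fin n → ℝ) (hy : y ∈ convexHull ℝ (Set.range a))
    (hy0 : 0 < f y) (hyδ : f y ≤ δ) :
    ∃! lam : Fin (d + 1) → ℝ,
      (∀ i, 0 ≤ lam i) ∧ (∑ i, lam i = 1) ∧
      f (∑ i, lam i • a i) = δ ∧
      ∃ s ∈ Set.Icc (0 : ℝ) 1,
        y = (1 - s) • (∑ i ∈ univ.filter (fun i : Fin (d + 1) => (i : ℕ) ≤ k),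
              (lam i / ∑ j ∈ univ.filter (fun j : Fin (d + 1) => (j : ℕ) ≤ k), lam j) • a i)
            + s • (∑ i, lam i • a i) := by
  classical
  -- extract barycentric coordinates r of y
  rw [convexHull_range_eq_exists_affineCombination] at hy
  obtain ⟨S, w, hw0, hw1, hwy⟩ := hy
  obtain ⟨r, hrdef⟩ : ∃ r : Fin (d + 1) → ℝ, r = fun i => if i ∈ S then w i else 0 := ⟨_, rfl⟩
  have hr0 : ∀ i, 0 ≤ r i := by
    intro i; rw [hrdef]; dsimp only; split
    · exact hw0 i ‹_›
    · exact le_refl 0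
  have hr1 : ∑ i, r i = 1 := by
    rw [hrdef]
    rw [Finset.sum_ite_mem, Finset.univ_inter]; exact hw1
  have hind : Set.indicator (↑S : Set (Fin (d + 1))) w = r := by
    funext i; simp [Set.indicator_apply, hrdef]
  have hry : y = ∑ i, r i • a i := by
    rw [← hwy, Finset.affineCombination_indicator_subset w a (Finset.subset_univ S), hind,
      Finset.univ.affineCombination_eq_linear_combination a r hr1]
  obtain ⟨F, hF⟩ : ∃ F, F = univ.filter (fun i : Fin (d + 1) => (i : ℕ) ≤ k) := ⟨_, rfl⟩
  obtain ⟨Fc, hFc⟩ : ∃ Fc, Fc = univ.filter (fun i : Fin (d + 1) => ¬ (i : ℕ) ≤ k) := ⟨_, rfl⟩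
  have hmemF : ∀ i, i ∈ F ↔ (i : ℕ) ≤ k := by intro i; rw [hF]; simp
  have hmemFc : ∀ i, i ∈ Fc ↔ ¬ (i : ℕ) ≤ k := by intro i; rw [hFc]; simp
  have hsplit : ∀ g : Fin (d + 1) → ℝ,
      ∑ i ∈ F, g i + ∑ i ∈ Fc, g i = ∑ i, g i := by
    intro g; rw [hF, hFc]; exact Finset.sum_filter_add_sum_filter_not univ _ g
  have hsplitv : ∀ g : Fin (d + 1) → (Fin n → ℝ),
      ∑ i ∈ F, g i + ∑ i ∈ Fc, g i = ∑ i, g i := by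
    intro g; rw [hF, hFc]; exact Finset.sum_filter_add_sum_filter_not univ _ g
  obtain ⟨R, hR⟩ : ∃ R : ℝ, R = ∑ i ∈ F, r i := ⟨_, rfl⟩
  have hRc : ∑ i ∈ Fc, r i = 1 - R := by
    have h1 := hsplit r
    rw [hr1] at h1
    rw [hR]
    linarith
  obtain ⟨t0, ht0⟩ : ∃ t0 : ℝ, t0 = f y := ⟨_, rfl⟩
  rw [← ht0] at hy0 hyδ
  obtain ⟨s, hs⟩ : ∃ s : ℝ, s = t0 / δ := ⟨_, rfl⟩
  have hs0 : 0 < s := hs ▸ div_pos hy0 hδ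
  have hs1 : s ≤ 1 := hs ▸ (div_le_one hδ).2 hyδ
  have hsne : s ≠ 0 := ne_of_gt hs0
  have hst : s * δ = t0 := by rw [hs]; field_simp
  -- t0 = ∑ i ∈ Fc, r i * f (a i)
  have hft : t0 = ∑ i ∈ Fc, r i * f (a i) := by
    rw [ht0, hry, fcomb17 f a r hr1, ← hsplit (fun i => r i * f (a i))]
    have h1 : ∑ i ∈ F, r i * f (a i) = 0 := by
      apply Finset.sum_eq_zero
      intro i hi
      rw [hf0 i ((hmemF i).1 hi), mul_zero]
    rw [h1, zero_add]
  -- δ * (1 - R) < t0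
  have hkey : δ * (1 - R) < t0 := by
    have hex : ∃ i ∈ Fc, 0 < r i := by
      by_contra hcon
      push_neg at hcon
      have h2 : ∑ i ∈ Fc, r i * f (a i) = 0 := Finset.sum_eq_zero (fun i hi => by
        have h1 : r i = 0 := le_antisymm (hcon i hi) (hr0 i)
        rw [h1, zero_mul])
      rw [hft, h2] at hy0
      exact lt_irrefl 0 hy0
    obtain ⟨i0, hi0, hri0⟩ := hex
    have h3 : ∑ i ∈ Fc, δ * r i < ∑ i ∈ Fc, r i * f (a i) := by
      apply Finset.sum_lt_sum
      · intro i hi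
        have hfa : δ ≤ f (a i) := le_of_lt (hf1 i (not_le.mp ((hmemFc i).1 hi)))
        nlinarith [hr0 i]
      · refine ⟨i0, hi0, ?_⟩
        have hfa : δ < f (a i0) := hf1 i0 (not_le.mp ((hmemFc i0).1 hi0))
        nlinarith
    rw [hft]
    calc δ * (1 - R) = ∑ i ∈ Fc, δ * r i := by rw [← Finset.mul_sum, hRc]
    _ < _ := h3
  obtain ⟨α, hα⟩ : ∃ α : ℝ, α = (R - (1 - s)) / s := ⟨_, rfl⟩
  have hα0 : 0 < α := by
    rw [hα]
    apply div_pos _ hs0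
    have h4 : 1 - R < s := by
      rw [hs, lt_div_iff₀ hδ]
      nlinarith
    linarith
  have hRs : R = (1 - s) + s * α := by
    rw [hα]; field_simp; ring
  have hR0 : 0 < R := by nlinarith
  have hRne : R ≠ 0 := ne_of_gt hR0
  have hαne : α ≠ 0 := ne_of_gt hα0
  obtain ⟨lam, hlam⟩ : ∃ lam : Fin (d + 1) → ℝ,
      lam = fun i : Fin (d + 1) => if (i : ℕ) ≤ k then r i * α / R else r i / s := ⟨_, rfl⟩
  have hlamF : ∀ i : Fin (d + 1), (i : ℕ) ≤ k → lam i = r i * α / R := by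
    intro i hi; simp only [hlam]; exact if_pos hi
  have hlamFc : ∀ i : Fin (d + 1), ¬ (i : ℕ) ≤ k → lam i = r i / s := by
    intro i hi; simp only [hlam]; exact if_neg hi
  have hlam0 : ∀ i : Fin (d + 1), 0 ≤ lam i := by
    intro i
    by_cases hik : (i : ℕ) ≤ k
    · rw [hlamF i hik]; exact div_nonneg (mul_nonneg (hr0 i) hα0.le) hR0.le
    · rw [hlamFc i hik]; exact div_nonneg (hr0 i) hs0.le
  have hsumF : ∑ i ∈ F, lam i = α := by
    have h5 : ∑ i ∈ F, lam i = ∑ i ∈ F, r i * α / R :=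
      Finset.sum_congr rfl (fun i hi => hlamF i ((hmemF i).1 hi))
    rw [h5, ← Finset.sum_div, ← Finset.sum_mul, ← hR]
    field_simp
  have hsumFc : ∑ i ∈ Fc, lam i = (1 - R) / s := by
    have h5 : ∑ i ∈ Fc, lam i = ∑ i ∈ Fc, r i / s :=
      Finset.sum_congr rfl (fun i hi => hlamFc i ((hmemFc i).1 hi))
    rw [h5, ← Finset.sum_div, hRc]
  have hlam1 : ∑ i, lam i = 1 := by
    rw [← hsplit lam, hsumF, hsumFc, hα]
    field_simp
    ring
  have hlamδ : f (∑ i, lam i • a i) = δ := by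
    rw [fcomb17 f a lam hlam1, ← hsplit (fun i => lam i * f (a i))]
    have h1 : ∑ i ∈ F, lam i * f (a i) = 0 := Finset.sum_eq_zero (fun i hi => by
      rw [hf0 i ((hmemF i).1 hi), mul_zero])
    have h2 : ∑ i ∈ Fc, lam i * f (a i) = t0 / s := by
      rw [hft, Finset.sum_div]
      apply Finset.sum_congr rfl
      intro i hi
      rw [hlamFc i ((hmemFc i).1 hi)]
      ring
    rw [h1, zero_add, h2, hs]
    field_simp
  rw [← hF]
  refine ⟨lam, ⟨hlam0, hlam1, hlamδ, s, ⟨le_of_lt hs0, hs1⟩, ?_⟩, ?_⟩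
  · -- segment identity for existence
    rw [hsumF, hry, smul_sum, smul_sum, ← hsplitv (fun i => r i • a i),
      ← hsplitv (fun i => s • (lam i • a i))]
    have eF : ∑ i ∈ F, r i • a i
        = ∑ i ∈ F, ((1 - s) • ((lam i / α) • a i) + s • (lam i • a i)) := by
      refine Finset.sum_congr rfl fun i hi => ?_
      have hik := (hmemF i).1 hi
      rw [hlamF i hik, smul_smul, smul_smul, ← add_smul]
      congr 1
      have e : r i * α / R / α = r i / R := by
        rw [div_div, mul_comm R α, ← div_div, mul_div_cancel_right₀ _ hαne]
      rw [e, ← mul_div_assoc, ← mul_div_assoc, ← add_div, eq_div_iff hRne]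
      linear_combination r i * hRs
    have eFc : ∑ i ∈ Fc, r i • a i = ∑ i ∈ Fc, s • (lam i • a i) := by
      refine Finset.sum_congr rfl fun i hi => ?_
      rw [hlamFc i ((hmemFc i).1 hi), smul_smul]
      congr 1
      field_simp
    rw [eF, eFc, Finset.sum_add_distrib, add_assoc]
  · -- uniqueness
    rintro lam' ⟨h0', h1', hδ', s', ⟨hs'0, hs'1⟩, hseg⟩
    obtain ⟨β, hβ⟩ : ∃ β : ℝ, β = ∑ j ∈ F, lam' j := ⟨_, rfl⟩
    rw [← hβ] at hseg
    have hβge : 0 ≤ β := hβ ▸ Finset.sum_nonneg (fun i _ => h0' i)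
    have hβ0 : 0 < β := by
      rcases eq_or_lt_of_le hβge with h | h
      · exfalso
        have hz : ∀ i ∈ F, lam' i = 0 := by
          rw [hβ] at h
          intro i hi
          exact (Finset.sum_eq_zero_iff_of_nonneg (fun j _ => h0' j)).1 h.symm i hi
        have hFc1 : ∑ i ∈ Fc, lam' i = 1 := by
          have h6 := hsplit lam'
          rw [h1', Finset.sum_eq_zero hz] at h6
          linarith
        have hgt : δ < f (∑ i, lam' i • a i) := by
          have z1 : ∑ i ∈ F, lam' i * f (a i) = 0 :=
            Finset.sum_eq_zero (fun i hi => by rw [hz i hi, zero_mul])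
          rw [fcomb17 f a lam' h1',
            ← hsplit (fun i => lam' i * f (a i)), z1, zero_add]
          have hex : ∃ i ∈ Fc, 0 < lam' i := by
            by_contra hcon
            push_neg at hcon
            have h7 : ∑ i ∈ Fc, lam' i = 0 :=
              Finset.sum_eq_zero (fun i hi => le_antisymm (hcon i hi) (h0' i))
            rw [h7] at hFc1
            norm_num at hFc1
          obtain ⟨i0, hi0, hli0⟩ := hex
          have hlt : ∑ i ∈ Fc, δ * lam' i < ∑ i ∈ Fc, lam' i * f (a i) := by
            apply Finset.sum_lt_sum
            · intro i hi
              have h8 := le_of_lt (hf1 i (not_le.mp ((hmemFc i).1 hi)))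
              rw [mul_comm]
              exact mul_le_mul_of_nonneg_left h8 (h0' i)
            · refine ⟨i0, hi0, ?_⟩
              have h8 := hf1 i0 (not_le.mp ((hmemFc i0).1 hi0))
              rw [mul_comm]
              exact (mul_lt_mul_iff_right₀ hli0).2 h8
          calc δ = ∑ i ∈ Fc, δ * lam' i := by rw [← Finset.mul_sum, hFc1, mul_one]
          _ < _ := hlt
        exact lt_irrefl δ (hδ' ▸ hgt)
      · exact h
    have hβne : β ≠ 0 := ne_of_gt hβ0
    obtain ⟨w', hw'⟩ : ∃ w' : Fin (d + 1) → ℝ, w' = fun i : Fin (d + 1) =>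
        (if (i : ℕ) ≤ k then (1 - s') * (lam' i / β) else 0) + s' * lam' i := ⟨_, rfl⟩
    have hw'F : ∀ i : Fin (d + 1), (i : ℕ) ≤ k →
        w' i = (1 - s') * (lam' i / β) + s' * lam' i := by
      intro i hi; simp only [hw']; rw [if_pos hi]
    have hw'Fc : ∀ i : Fin (d + 1), ¬ (i : ℕ) ≤ k → w' i = s' * lam' i := by
      intro i hi; simp only [hw']; rw [if_neg hi, zero_add]
    have hsumFw : ∑ i ∈ F, w' i = (1 - s') + s' * β := by
      rw [Finset.sum_congr rfl (fun i hi => hw'F i ((hmemF i).1 hi)),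
        Finset.sum_add_distrib]
      congr 1
      · rw [← Finset.mul_sum, ← Finset.sum_div, ← hβ, div_self hβne, mul_one]
      · rw [← Finset.mul_sum, ← hβ]
    have hsumFcw : ∑ i ∈ Fc, w' i = s' * ∑ i ∈ Fc, lam' i := by
      rw [Finset.sum_congr rfl (fun i hi => hw'Fc i ((hmemFc i).1 hi)), ← Finset.mul_sum]
    have hFc1' : ∑ i ∈ Fc, lam' i = 1 - β := by
      have h6 := hsplit lam'
      rw [h1', ← hβ] at h6
      linarith
    have hw'sum : ∑ i, w' i = 1 := by
      rw [← hsplit w', hsumFw, hsumFcw, hFc1']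
      ring
    have hw'0 : ∀ i, 0 ≤ w' i := by
      intro i
      by_cases hik : (i : ℕ) ≤ k
      · rw [hw'F i hik]
        have := h0' i
        have h9 : (0:ℝ) ≤ 1 - s' := by linarith
        positivity
      · rw [hw'Fc i hik]
        exact mul_nonneg hs'0 (h0' i)
    have hyw' : y = ∑ i, w' i • a i := by
      rw [hseg]
      symm
      rw [smul_sum, smul_sum, ← hsplitv (fun i => w' i • a i),
        ← hsplitv (fun i => s' • (lam' i • a i))]
      have eF : ∑ i ∈ F, w' i • a i
          = ∑ i ∈ F, ((1 - s') • ((lam' i / β) • a i) + s' • (lam' i • a i)) := by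
        refine Finset.sum_congr rfl fun i hi => ?_
        rw [hw'F i ((hmemF i).1 hi), add_smul, smul_smul, smul_smul]
      have eFc : ∑ i ∈ Fc, w' i • a i = ∑ i ∈ Fc, s' • (lam' i • a i) := by
        refine Finset.sum_congr rfl fun i hi => ?_
        rw [hw'Fc i ((hmemFc i).1 hi), smul_smul]
      rw [eF, eFc, Finset.sum_add_distrib, add_assoc]
    have hw'r : w' = r := bary_unique17 ha w' r hw'sum hr1 (hyw'.symm.trans hry)
    -- compute f y = s' * δ, hence s' = s
    have hlf : ∑ i ∈ Fc, lam' i * f (a i) = δ := by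
      have h10 := fcomb17 f a lam' h1'
      rw [hδ'] at h10
      have z1 : ∑ i ∈ F, lam' i * f (a i) = 0 :=
        Finset.sum_eq_zero (fun i hi => by rw [hf0 i ((hmemF i).1 hi), mul_zero])
      rw [← hsplit (fun i => lam' i * f (a i)), z1, zero_add] at h10
      exact h10.symm
    have hfy : t0 = s' * δ := by
      have z1 : ∑ i ∈ F, w' i * f (a i) = 0 :=
        Finset.sum_eq_zero (fun i hi => by rw [hf0 i ((hmemF i).1 hi), mul_zero])
      have z2 : ∑ i ∈ Fc, w' i * f (a i) = s' * ∑ i ∈ Fc, lam' i * f (a i) := by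
        rw [Finset.mul_sum]
        refine Finset.sum_congr rfl fun i hi => ?_
        rw [hw'Fc i ((hmemFc i).1 hi)]
        ring
      rw [ht0, hyw', fcomb17 f a w' hw'sum, ← hsplit (fun i => w' i * f (a i)), z1,
        zero_add, z2, hlf]
    have hs'eq : s' = s := by
      rw [hs, hfy]
      field_simp
    -- β = α
    have hβα : β = α := by
      have h11 : R = (1 - s) + s * β := by
        rw [hR, ← hw'r, hsumFw, hs'eq]
      have h12 : s * β = s * α := by
        rw [hRs] at h11
        linarith
      exact mul_left_cancel₀ hsne h12
    -- conclude lam' = lam componentwise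
    funext i
    by_cases hik : (i : ℕ) ≤ k
    · have hri : r i = (1 - s) * (lam' i / α) + s * lam' i := by
        rw [← hw'r, hw'F i hik, hs'eq, hβα]
      rw [hlamF i hik]
      rw [eq_div_iff hRne]
      field_simp at hri
      linear_combination lam' i * hRs - hri
    · have hri : r i = s * lam' i := by
        rw [← hw'r, hw'Fc i hik, hs'eq]
      rw [hlamFc i hik]
      rw [eq_div_iff hsne]
      linear_combination -hri
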